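/- The admissibility constant of the Altes chirplet equals ∫_{0}^{∞} |U(ω)|²/ω dω = √(π/(2κ)). -/

import Mathlib

open MeasureTheory

/-- The reparameterized Altes chirplet frequency response. -/
noncomputable def altes (κ ω₀ lam : ℝ) : ℝ → ℂ := fun ω =>
  if 0 < ω then
    Complex.exp (-(↑(κ * (Real.log (ω / ω₀)) ^ 2) : ℂ)) *
      Complex.exp (2 * Real.pi * Complex.I * Real.log ω / Real.log lam)
  else 0

/-- The admissibility constant of the Altes chirplet equals
∫₀^∞ |U(ω)|²/ω dω = √(π/(2κ)). -/
theorem altes_admissibility_constant (κ ω₀ lam : ℝ) (hκ : 0 < κ) (hω₀ : 0 < ω₀)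
    (hlam : 0 < lam) (hlam1 : lam ≠ 1) :
    (∫ ω in Set.Ioi (0 : ℝ), ‖altes κ ω₀ lam ω‖ ^ 2 / ω) =
      Real.sqrt (Real.pi / (2 * κ)) := by
  have hnorm : ∀ ω : ℝ, 0 < ω →
      ‖altes κ ω₀ lam ω‖ ^ 2 = Real.exp (-(2 * κ) * (Real.log (ω / ω₀)) ^ 2) := by
    intro ω hω
    simp only [altes, if_pos hω, norm_mul, Complex.norm_exp]
    have h1 : (-(↑(κ * (Real.log (ω / ω₀)) ^ 2) : ℂ)).re = -(κ * (Real.log (ω / ω₀)) ^ 2) := by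
      rw [Complex.neg_re, Complex.ofReal_re]
    have h2 : (2 * Real.pi * Complex.I * Real.log ω / Real.log lam).re = 0 := by
      simp [Complex.div_re, Complex.mul_re, Complex.mul_im]
    rw [h1, h2]
    rw [Real.exp_zero, mul_one, ← Real.exp_nat_mul]
    ring_nf
  have key : (∫ ω in Set.Ioi (0 : ℝ), ‖altes κ ω₀ lam ω‖ ^ 2 / ω)
      = ∫ ω in Set.Ioi (0 : ℝ), Real.exp (-(2 * κ) * (Real.log (ω / ω₀)) ^ 2) / ω := by
    refine setIntegral_congr_fun measurableSet_Ioi fun ω hω => ?_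
    rw [hnorm ω hω]
  rw [key]
  have himg : Real.exp '' Set.univ = Set.Ioi (0 : ℝ) := by
    ext x
    simp only [Set.image_univ, Set.mem_range, Set.mem_Ioi]
    constructor
    · rintro ⟨y, rfl⟩; exact Real.exp_pos y
    · intro hx; exact ⟨Real.log x, Real.exp_log hx⟩
  have hderiv : ∀ x ∈ (Set.univ : Set ℝ),
      HasDerivWithinAt Real.exp (Real.exp x) Set.univ x :=
    fun x _ => (Real.hasDerivAt_exp x).hasDerivWithinAt
  have hinj : Set.InjOn Real.exp Set.univ := Real.exp_injective.injOn
  rw [← himg, MeasureTheory.integral_image_eq_integral_abs_deriv_smul MeasurableSet.univ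
    hderiv hinj (fun ω => Real.exp (-(2 * κ) * (Real.log (ω / ω₀)) ^ 2) / ω)]
  have hsimp : ∀ x : ℝ, |Real.exp x| • (Real.exp (-(2 * κ) * (Real.log (Real.exp x / ω₀)) ^ 2)
      / Real.exp x) = Real.exp (-(2 * κ) * (x - Real.log ω₀) ^ 2) := by
    intro x
    rw [abs_of_pos (Real.exp_pos x), smul_eq_mul, mul_div_cancel₀ _ (Real.exp_ne_zero x),
      Real.log_div (Real.exp_ne_zero x) (ne_of_gt hω₀), Real.log_exp]
  simp only [hsimp]
  rw [Measure.restrict_univ]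
  have : (∫ x : ℝ, Real.exp (-(2 * κ) * (x - Real.log ω₀) ^ 2))
      = ∫ x : ℝ, Real.exp (-(2 * κ) * x ^ 2) := by
    exact integral_sub_right_eq_self (fun x => Real.exp (-(2 * κ) * x ^ 2)) (Real.log ω₀)
  rw [this, integral_gaussian]
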